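/- Let G = (V, E) be a digraph with m = |E| ≥ 1 arcs. Fix x ∈ V. Then Σ_{(u₁,v₁) ∈ E} Σ_{u₂ ∈ N⁻(v₁)} [(u₂,x) ∈ E] · 1/(m·d⁻(v₁)·d⁺(u₂)) = d⁻(x)/m. Equivalently: if u₁ is chosen with probability d⁺(u₁)/m, then v₁ uniformly in N⁺(u₁), then u₂ uniformly in N⁻(v₁), then v₂ uniformly in N⁺(u₂), the probability that v₂ = x equals d⁻(x)/m. -/

import Mathlib

set_option maxHeartbeats 1600000


/-- In a digraph with `m ≥ 1` arcs and no self-loops, after the three-step alternating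
walk (arc `(u₁,v₁)` with probability `1/m`, then `u₂` uniform in `N⁻(v₁)`, then `v₂`
uniform in `N⁺(u₂)`), the probability of landing on `x` is `d⁻(x)/m`:
`Σ_{(u₁,v₁) ∈ E} Σ_{u₂ ∈ N⁻(v₁)} [(u₂,x) ∈ E] / (m · d⁻(v₁) · d⁺(u₂)) = d⁻(x)/m`. -/
theorem three_step_walk_in_degree {V : Type*} [Fintype V] [DecidableEq V]
    (E : Finset (V × V)) (hloop : ∀ e ∈ E, e.1 ≠ e.2) (hm : 1 ≤ E.card) (x : V) :
    (∑ e ∈ E, ∑ u₂ ∈ (E.filter (fun f => f.2 = e.2)).image Prod.fst,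
        if (u₂, x) ∈ E then
          (1 : ℝ) / ((E.card : ℝ) * ((E.filter (fun f => f.2 = e.2)).card : ℝ) *
            ((E.filter (fun f => f.1 = u₂)).card : ℝ))
        else 0)
      = ((E.filter (fun f => f.2 = x)).card : ℝ) / (E.card : ℝ) := by
  classical
  set m : ℝ := (E.card : ℝ) with hmdef
  set din : V → ℝ := fun v => ((E.filter (fun f => f.2 = v)).card : ℝ) with hdin
  set dout : V → ℝ := fun u => ((E.filter (fun f => f.1 = u)).card : ℝ) with hdout
  -- Step 1: replace the sum over the image by a sum over the filter.
  have step1 : ∀ e ∈ E,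
      (∑ u₂ ∈ (E.filter (fun f => f.2 = e.2)).image Prod.fst,
        if (u₂, x) ∈ E then (1 : ℝ) / (m * din e.2 * dout u₂) else 0)
      = ∑ f ∈ E.filter (fun f => f.2 = e.2),
          (if (f.1, x) ∈ E then (1 : ℝ) / (m * din e.2 * dout f.1) else 0) := by
    intro e _
    refine Finset.sum_image ?_
    intro a ha b hb hab
    simp only [Finset.mem_coe, Finset.mem_filter] at ha hb
    exact Prod.ext hab (ha.2.trans hb.2.symm)
  calc
    (∑ e ∈ E, ∑ u₂ ∈ (E.filter (fun f => f.2 = e.2)).image Prod.fst,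
        if (u₂, x) ∈ E then (1 : ℝ) / (m * din e.2 * dout u₂) else 0)
      = ∑ e ∈ E, ∑ f ∈ E.filter (fun f => f.2 = e.2),
          (if (f.1, x) ∈ E then (1 : ℝ) / (m * din e.2 * dout f.1) else 0) :=
        Finset.sum_congr rfl step1
    _ = ∑ e ∈ E, ∑ f ∈ E,
          (if f.2 = e.2 then
            (if (f.1, x) ∈ E then (1 : ℝ) / (m * din e.2 * dout f.1) else 0) else 0) := by
        refine Finset.sum_congr rfl fun e _ => ?_
        rw [Finset.sum_filter]
    _ = ∑ f ∈ E, ∑ e ∈ E,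
          (if f.2 = e.2 then
            (if (f.1, x) ∈ E then (1 : ℝ) / (m * din e.2 * dout f.1) else 0) else 0) :=
        Finset.sum_comm
    _ = ∑ f ∈ E, din f.2 *
          (if (f.1, x) ∈ E then (1 : ℝ) / (m * din f.2 * dout f.1) else 0) := by
        refine Finset.sum_congr rfl fun f _ => ?_
        have : ∀ e ∈ E,
            (if f.2 = e.2 then
              (if (f.1, x) ∈ E then (1 : ℝ) / (m * din e.2 * dout f.1) else 0) else 0)
            = (if f.2 = e.2 then
              (if (f.1, x) ∈ E then (1 : ℝ) / (m * din f.2 * dout f.1) else 0) else 0) := by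
          intro e _
          by_cases h : f.2 = e.2
          · simp [h]
          · simp [h]
        rw [Finset.sum_congr rfl this, ← Finset.sum_filter, Finset.sum_const,
          nsmul_eq_mul]
        congr 1
        simp only [hdin]
        norm_cast
        congr 1
        apply Finset.filter_congr
        intro a _
        simp [eq_comm]
    _ = ∑ f ∈ E, (if (f.1, x) ∈ E then (1 : ℝ) / (m * dout f.1) else 0) := by
        refine Finset.sum_congr rfl fun f hf => ?_
        have hpos : 0 < din f.2 := by
          simp only [hdin]
          have : f ∈ E.filter (fun g => g.2 = f.2) := Finset.mem_filter.2 ⟨hf, rfl⟩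
          exact_mod_cast Finset.card_pos.2 ⟨f, this⟩
        by_cases h : (f.1, x) ∈ E
        · simp only [h, if_true]
          field_simp
        · simp [h]
    _ = ∑ u : V, ∑ f ∈ E.filter (fun f => f.1 = u),
          (if (f.1, x) ∈ E then (1 : ℝ) / (m * dout f.1) else 0) :=
        (Finset.sum_fiberwise E (fun f => f.1)
          (fun f => if (f.1, x) ∈ E then (1 : ℝ) / (m * dout f.1) else 0)).symm
    _ = ∑ u : V, (if (u, x) ∈ E then (1 : ℝ) / m else 0) := by
        refine Finset.sum_congr rfl fun u _ => ?_
        have : ∀ f ∈ E.filter (fun f => f.1 = u),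
            (if (f.1, x) ∈ E then (1 : ℝ) / (m * dout f.1) else 0)
            = (if (u, x) ∈ E then (1 : ℝ) / (m * dout u) else 0) := by
          intro f hf
          have h1 : f.1 = u := (Finset.mem_filter.1 hf).2
          rw [h1]
        rw [Finset.sum_congr rfl this, Finset.sum_const, nsmul_eq_mul]
        by_cases h : (u, x) ∈ E
        · have hpos : 0 < dout u := by
            simp only [hdout]
            have : (u, x) ∈ E.filter (fun g => g.1 = u) := Finset.mem_filter.2 ⟨h, rfl⟩
            exact_mod_cast Finset.card_pos.2 ⟨(u, x), this⟩
          simp only [h, if_true]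
          rw [show ((E.filter (fun f => f.1 = u)).card : ℝ) = dout u from rfl]
          field_simp
        · simp [h]
    _ = ((Finset.univ.filter (fun u => (u, x) ∈ E)).card : ℝ) * ((1 : ℝ) / m) := by
        rw [← Finset.sum_filter, Finset.sum_const, nsmul_eq_mul]
    _ = din x / m := by
        have : (E.filter (fun f => f.2 = x)).card
            = (Finset.univ.filter (fun u => (u, x) ∈ E)).card := by
          apply Finset.card_bij (fun f _ => f.1)
          · intro f hf
            simp only [Finset.mem_filter] at hf ⊢
            refine ⟨Finset.mem_univ _, ?_⟩
            have : f = (f.1, x) := by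
              rw [← hf.2]
            rw [← this]; exact hf.1
          · intro a ha b hb hab
            simp only [Finset.mem_filter] at ha hb
            exact Prod.ext hab (ha.2.trans hb.2.symm)
          · intro u hu
            simp only [Finset.mem_filter] at hu
            exact ⟨(u, x), Finset.mem_filter.2 ⟨hu.2, rfl⟩, rfl⟩
        have h2 : din x = ((Finset.univ.filter (fun u => (u, x) ∈ E)).card : ℝ) := by
          simp only [hdin]
          exact_mod_cast this
        rw [h2]
        ring
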